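/- A field K is real closed if and only if K is real (-1 is not a sum of squares), -1 is not a square in K, and the ring K[X]/(X^2+1) is an algebraically closed field. -/

import Mathlib

open Polynomial IntermediateField

set_option synthInstance.maxHeartbeats 1000000
set_option maxHeartbeats 2000000

/-- A field is *real* (formally real) if `-1` is not a sum of squares. -/
def IsRealField (K : Type*) [Field K] : Prop :=
  ¬ ∃ (n : ℕ) (f : Fin n → K), (-1 : K) = ∑ i, f i ^ 2

section RealLemmas
variable {K : Type*} [Field K]

theorem IsRealField.eq_zero_of_sum_sq (hr : IsRealField K) {n : ℕ} {f : Fin n → K}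
    (h : ∑ i, f i ^ 2 = 0) (j : Fin n) : f j = 0 := by
  by_contra hj
  refine hr ⟨n, fun i => if i = j then 0 else f i / f j, ?_⟩
  have h1 : ∀ i, (if i = j then (0:K) else f i / f j) ^ 2
      = (if i = j then (0:K) else f i ^ 2) / f j ^ 2 := by
    intro i; split <;> simp [div_pow]
  have h2 : ∑ i, (if i = j then (0:K) else f i ^ 2) = - f j ^ 2 := by
    have : ∀ i, (if i = j then (0:K) else f i ^ 2) = f i ^ 2 - (if i = j then f i ^ 2 else 0) := by
      intro i; split <;> simp
    rw [Finset.sum_congr rfl fun i _ => this i, Finset.sum_sub_distrib, h,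
      Finset.sum_ite_eq' Finset.univ j fun i => f i ^ 2]
    simp
  rw [Finset.sum_congr rfl fun i _ => h1 i, ← Finset.sum_div, h2, neg_div,
    div_self (pow_ne_zero 2 hj)]

theorem IsRealField.charZero (hr : IsRealField K) : CharZero K := by
  refine charZero_of_inj_zero fun n hn => ?_
  by_contra h
  obtain ⟨m, rfl⟩ := Nat.exists_eq_succ_of_ne_zero h
  refine hr ⟨m, fun _ => 1, ?_⟩
  have hn' : ((m : K) + 1) = 0 := by push_cast at hn; exact hn
  have hm : (-1 : K) = (m : K) := by linear_combination -hn'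
  simpa using hm

theorem IsRealField.not_isSquare_neg_one (hr : IsRealField K) : ¬ IsSquare (-1 : K) := by
  rintro ⟨c, hc⟩
  exact hr ⟨1, fun _ => c, by simpa [sq] using hc⟩

variable (hr : IsRealField K) (hsq : ∀ x : K, IsSquare x ∨ IsSquare (-x))
include hr hsq

theorem isSquare_add {a b : K} (ha : IsSquare a) (hb : IsSquare b) : IsSquare (a + b) := by
  rcases hsq (a + b) with h | h
  · exact h
  obtain ⟨c, hc⟩ := h
  obtain ⟨x, rfl⟩ := ha
  obtain ⟨y, rfl⟩ := hb
  have hsum : x ^ 2 + y ^ 2 + c ^ 2 = 0 := by linear_combination -hc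
  have h3 : ∑ i, (![x, y, c] i) ^ 2 = 0 := by
    rw [Fin.sum_univ_three]; simpa using hsum
  have hx := hr.eq_zero_of_sum_sq h3 0
  have hy := hr.eq_zero_of_sum_sq h3 1
  simp at hx hy
  subst hx; subst hy
  exact ⟨0, by ring⟩

omit hsq in
theorem eq_zero_of_isSquare_of_isSquare_neg {a : K} (h1 : IsSquare a) (h2 : IsSquare (-a)) :
    a = 0 := by
  obtain ⟨x, rfl⟩ := h1
  obtain ⟨y, hy⟩ := h2
  have h3 : ∑ i, (![x, y] i) ^ 2 = 0 := by
    rw [Fin.sum_univ_two]; simp only [Matrix.cons_val_zero, Matrix.cons_val_one, Matrix.head_cons]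
    linear_combination -hy
  have hx := hr.eq_zero_of_sum_sq h3 0
  simp at hx; subst hx; ring

end RealLemmas

section Cone
variable {K : Type*} [Field K]

theorem exists_isSquare_sqrt (hsq : ∀ x : K, IsSquare x ∨ IsSquare (-x)) {a : K}
    (ha : IsSquare a) : ∃ r : K, IsSquare r ∧ r * r = a := by
  obtain ⟨s, rfl⟩ := ha
  rcases hsq s with h | h
  · exact ⟨s, h, rfl⟩
  · exact ⟨-s, h, by ring⟩

theorem isSquare_sub_of_sq_add_sq (hr : IsRealField K)
    (hsq : ∀ x : K, IsSquare x ∨ IsSquare (-x)) {r a b : K}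
    (hrP : IsSquare r) (hre : r * r = a * a + b * b) :
    IsSquare (r - a) := by
  by_contra hcon
  rcases hsq (r - a) with h | h
  · exact hcon h
  obtain ⟨u, hu⟩ := h
  have hu' : a - r = u * u := by linear_combination hu
  have haP : IsSquare a := by
    have ha' : a = r + u * u := by linear_combination hu'
    rw [ha']; exact isSquare_add hr hsq hrP ⟨u, rfl⟩
  by_cases hu0 : u = 0
  · subst hu0
    exact hcon ⟨0, by linear_combination -hu'⟩
  · have hne : a - r ≠ 0 := by rw [hu']; exact mul_ne_zero hu0 hu0
    have hkey : -(r + a) = (b / u) * (b / u) := by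
      have h1 : -(r + a) = b * b / (a - r) := by
        rw [eq_div_iff hne]; linear_combination hre
      rw [h1, hu', div_mul_div_comm]
    have hra0 : r + a = 0 :=
      eq_zero_of_isSquare_of_isSquare_neg hr (isSquare_add hr hsq hrP haP) ⟨b / u, hkey⟩
    have h2r : -(2 * r) = u * u := by linear_combination hu' - hra0
    have h2rP : IsSquare (2 * r) := by
      have h2r' : 2 * r = r + r := by ring
      rw [h2r']; exact isSquare_add hr hsq hrP hrP
    have h20 : (2 : K) * r = 0 := eq_zero_of_isSquare_of_isSquare_neg hr h2rP ⟨u, h2r⟩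
    haveI := hr.charZero
    have hrz : r = 0 := by
      rcases mul_eq_zero.mp h20 with h | h
      · exact absurd h two_ne_zero
      · exact h
    apply hu0
    have huu : u * u = 0 := by
      rw [← hu']; rw [hrz] at hra0 ⊢; linear_combination hra0
    exact mul_self_eq_zero.mp huu

theorem isSquare_two_inv (hr : IsRealField K)
    (hsq : ∀ x : K, IsSquare x ∨ IsSquare (-x)) : IsSquare ((2 : K)⁻¹) := by
  have h2 : IsSquare (2 : K) := by
    have : (2 : K) = 1 + 1 := by norm_num
    rw [this]; exact isSquare_add hr hsq ⟨1, by ring⟩ ⟨1, by ring⟩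
  obtain ⟨c, hc⟩ := h2
  exact ⟨c⁻¹, by rw [hc, mul_inv]⟩

end Cone

section QuadraticGen
variable {A B : Type*} [Field A] [Ring B] [Nontrivial B] [Algebra A B]

/-- Elements `j, 1` are linearly independent when `j` is not in the base field. -/
theorem linIndep_of_not_mem {j : B} (hj : j ∉ Set.range (algebraMap A B)) :
    LinearIndependent A ![j, (1 : B)] := by
  rw [linearIndependent_fin2]
  constructor
  · simp only [Matrix.cons_val_one, Matrix.head_cons]
    exact one_ne_zero
  · intro a ha
    simp only [Matrix.cons_val_one, Matrix.head_cons, Matrix.cons_val_zero] at ha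
    exact hj ⟨a, by rw [Algebra.algebraMap_eq_smul_one]; exact ha⟩

end QuadraticGen

section Quadratic
variable {A B : Type*} [Field A] [Field B] [Algebra A B]

/-- In a 2-dimensional extension, every element has coordinates w.r.t. `1, j`. -/
theorem coords_of_finrank_two (h2 : Module.finrank A B = 2) {j : B}
    (hj : j ∉ Set.range (algebraMap A B)) (z : B) :
    ∃ a b : A, z = algebraMap A B a + algebraMap A B b * j := by
  have li := linIndep_of_not_mem hj
  let bas := basisOfLinearIndependentOfCardEqFinrank li (by simp [h2])
  have hrep := bas.sum_repr z
  rw [Fin.sum_univ_two] at hrep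
  have hb : ∀ k, bas k = ![j, (1:B)] k := fun k => by
    simp [bas, coe_basisOfLinearIndependentOfCardEqFinrank]
  refine ⟨bas.repr z 1, bas.repr z 0, ?_⟩
  conv_lhs => rw [← hrep]
  rw [hb 0, hb 1]
  simp only [Matrix.cons_val_zero, Matrix.cons_val_one, Matrix.head_cons]
  rw [Algebra.smul_def, Algebra.smul_def, mul_one]
  ring

/-- If `1, j` span and are independent, the extension has degree 2. -/
theorem finrank_eq_two_of_coords {j : B} (hj : j ∉ Set.range (algebraMap A B))
    (hsur : ∀ z : B, ∃ a b : A, z = algebraMap A B a + algebraMap A B b * j) :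
    Module.finrank A B = 2 := by
  have li : LinearIndependent A ![j, (1 : B)] := linIndep_of_not_mem hj
  have hspan : ⊤ ≤ Submodule.span A (Set.range ![j, (1 : B)]) := by
    intro z _
    have hrange : Set.range ![j, (1 : B)] = {j, 1} := by
      ext w
      simp [Matrix.range_cons, Matrix.range_empty]
      tauto
    rw [hrange]
    obtain ⟨a, b, rfl⟩ := hsur z
    apply Submodule.mem_span_pair.mpr
    refine ⟨b, a, ?_⟩
    rw [Algebra.smul_def, Algebra.smul_def, mul_one]
    ring
  let bas : Module.Basis (Fin 2) A B := Module.Basis.mk li hspan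
  rw [Module.finrank_eq_card_basis bas, Fintype.card_fin]

/-- There is no quadratic extension of a field in which every element is a square
(characteristic ≠ 2). -/
theorem no_quadratic_ext (h2 : Module.finrank A B = 2)
    (hsqA : ∀ z : A, IsSquare z) (h2ne : (2 : A) ≠ 0) : False := by
  haveI : FiniteDimensional A B := FiniteDimensional.of_finrank_eq_succ h2
  -- get an element outside the base field
  have hex : ∃ α : B, α ∉ Set.range (algebraMap A B) := by
    by_contra hall
    push_neg at hall
    have hbot : (⊥ : Subalgebra A B) = ⊤ := by
      rw [eq_top_iff]
      intro x _
      rw [Algebra.mem_bot]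
      exact hall x
    have := Subalgebra.bot_eq_top_iff_finrank_eq_one.mp hbot
    omega
  obtain ⟨α, hα⟩ := hex
  -- α² = u + v α
  obtain ⟨u, v, huv⟩ := coords_of_finrank_two h2 hα (α * α)
  set φ := algebraMap A B with hφ
  -- complete the square
  obtain ⟨t, ht⟩ := hsqA (u + v * v / 4)
  have h4 : (4 : A) ≠ 0 := by
    intro h
    apply h2ne
    have : (2:A) * 2 = 0 := by rw [← h]; norm_num
    rcases mul_eq_zero.mp this with h | h <;> exact h
  have hkey : (α - φ (v / 2) - φ t) * (α - φ (v / 2) + φ t) = 0 := by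
    haveI : NeZero (2 : A) := ⟨h2ne⟩
    have hv : φ (v / 2) + φ (v / 2) = φ v := by
      rw [← map_add, add_halves]
    have hvv : φ (v / 2) * φ (v / 2) - φ t * φ t = φ (-u) := by
      rw [← map_mul, ← map_mul, ← map_sub]
      congr 1
      rw [← ht]
      field_simp
      ring
    have hexp : (α - φ (v / 2) - φ t) * (α - φ (v / 2) + φ t)
        = α * α - (φ (v / 2) + φ (v / 2)) * α + (φ (v / 2) * φ (v / 2) - φ t * φ t) := by
      ring
    rw [hexp, hv, hvv, map_neg]
    linear_combination huv
  rcases mul_eq_zero.mp hkey with h | h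
  · exact hα ⟨v / 2 + t, by rw [map_add]; linear_combination -h⟩
  · exact hα ⟨v / 2 - t, by rw [map_sub]; linear_combination -h⟩

end Quadratic

section OddDegree
variable {K : Type*} [Field K]

/-- If every odd-degree polynomial has a root, every odd-degree irreducible polynomial
is linear. -/
theorem irreducible_odd_natDegree_eq_one
    (hroots : ∀ p : K[X], Odd p.natDegree → ∃ x : K, p.eval x = 0)
    {q : K[X]} (hq : Irreducible q) (ho : Odd q.natDegree) : q.natDegree = 1 := by
  obtain ⟨x, hx⟩ := hroots q ho
  have hdvd : X - C x ∣ q := dvd_iff_isRoot.mpr hx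
  obtain ⟨c, hc⟩ := hdvd
  rcases hq.isUnit_or_isUnit hc with h | h
  · exact absurd h (not_isUnit_X_sub_C x)
  · have hc0 : c ≠ 0 := fun h0 => by
      simp [h0] at hc
      exact hq.ne_zero hc
    rw [hc, natDegree_mul (X_sub_C_ne_zero x) hc0, natDegree_X_sub_C,
      natDegree_eq_zero_of_isUnit h]

/-- A real closed field has no nontrivial finite extension of odd degree. -/
theorem finrank_eq_one_of_odd
    (hroots : ∀ p : K[X], Odd p.natDegree → ∃ x : K, p.eval x = 0)
    (B : Type*) [Field B] [Algebra K B] [FiniteDimensional K B]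
    (hodd : Odd (Module.finrank K B)) : Module.finrank K B = 1 := by
  have hmem : ∀ x : B, x ∈ (⊥ : IntermediateField K B) := by
    intro x
    have hint : IsIntegral K x := Algebra.IsIntegral.isIntegral x
    have hdvd : (minpoly K x).natDegree ∣ Module.finrank K B := minpoly.degree_dvd hint
    have hondd : Odd (minpoly K x).natDegree := hodd.of_dvd_nat hdvd
    have h1 : (minpoly K x).natDegree = 1 :=
      irreducible_odd_natDegree_eq_one hroots (minpoly.irreducible hint) hondd
    have : Module.finrank K K⟮x⟯ = 1 := by
      rw [IntermediateField.adjoin.finrank hint, h1]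
    have hbot : K⟮x⟯ = ⊥ := IntermediateField.finrank_eq_one_iff.mp this
    have := IntermediateField.mem_adjoin_simple_self K x
    rwa [hbot] at this
  have htop : (⊤ : IntermediateField K B) = ⊥ := by
    rw [eq_bot_iff]
    intro x _
    exact hmem x
  have h1 : Module.finrank K (⊤ : IntermediateField K B) = 1 := by
    rw [htop]; exact IntermediateField.finrank_bot
  rwa [IntermediateField.finrank_top'] at h1

/-- The degree of a finite Galois extension of a real closed field is a power of 2. -/
theorem finrank_two_pow_of_galois
    (hroots : ∀ p : K[X], Odd p.natDegree → ∃ x : K, p.eval x = 0)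
    (M : Type*) [Field M] [Algebra K M] [FiniteDimensional K M] [IsGalois K M] :
    ∃ n : ℕ, Module.finrank K M = 2 ^ n := by
  classical
  haveI : Fact (Nat.Prime 2) := ⟨Nat.prime_two⟩
  obtain ⟨P⟩ : Nonempty (Sylow 2 (M ≃ₐ[K] M)) := inferInstance
  set G := M ≃ₐ[K] M
  set F₀ := IntermediateField.fixedField (P : Subgroup G) with hF₀
  obtain ⟨k, hk⟩ := (P.2).exists_card_eq
  have hcard : Module.finrank (↥F₀) M = Fintype.card (P : Subgroup G) :=
    (IntermediateField.finrank_fixedField_eq_card (P : Subgroup G)).trans Nat.card_eq_fintype_card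
  have hcard' : Module.finrank (↥F₀) M = Nat.card (P : Subgroup G) := by
    rw [hcard, Fintype.card_eq_nat_card]
  have htower : Module.finrank K (↥F₀) * Module.finrank (↥F₀) M = Module.finrank K M :=
    Module.finrank_mul_finrank K (↥F₀) M
  have hG : Fintype.card G = Module.finrank K M := Fintype.card_eq_nat_card.trans (IsGalois.card_aut_eq_finrank K M)
  have hidx : (P : Subgroup G).index * Nat.card (P : Subgroup G) = Nat.card G :=
    Subgroup.index_mul_card (P : Subgroup G)
  have hPpos : Nat.card (P : Subgroup G) ≠ 0 := Nat.card_pos.ne'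
  have hfr : Module.finrank K (↥F₀) = (P : Subgroup G).index := by
    have h1 : Module.finrank K (↥F₀) * Nat.card (P : Subgroup G)
        = (P : Subgroup G).index * Nat.card (P : Subgroup G) := by
      calc Module.finrank K (↥F₀) * Nat.card (P : Subgroup G)
          = Module.finrank K (↥F₀) * Module.finrank (↥F₀) M := by rw [hcard']
        _ = Module.finrank K M := htower
        _ = Fintype.card G := hG.symm
        _ = Nat.card G := Nat.card_eq_fintype_card.symm
        _ = (P : Subgroup G).index * Nat.card (P : Subgroup G) := hidx.symm
    exact Nat.eq_of_mul_eq_mul_right (Nat.pos_of_ne_zero hPpos) h1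
  haveI : (P : Subgroup G).FiniteIndex := inferInstance
  have hndvd : ¬ (2 ∣ (P : Subgroup G).index) := P.not_dvd_index
  have hodd : Odd (Module.finrank K (↥F₀)) := by
    rw [hfr, Nat.odd_iff]
    omega
  have h1 : Module.finrank K (↥F₀) = 1 := finrank_eq_one_of_odd hroots (↥F₀) hodd
  refine ⟨k, ?_⟩
  rw [← htower, h1, one_mul, hcard', hk]

end OddDegree

section NotMemGen
variable {K L : Type*} [Field K] [Ring L] [Nontrivial L] [Algebra K L]

theorem i_not_mem_range (hns : ¬ IsSquare (-1 : K)) {i : L} (hi : i * i = -1) :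
    i ∉ Set.range (algebraMap K L) := by
  rintro ⟨c, hc⟩
  apply hns
  refine ⟨c, (algebraMap K L).injective ?_⟩
  rw [map_neg, map_one, map_mul, hc, hi]

end NotMemGen

section SquaresInL
variable {K L : Type*} [Field K] [Field L] [Algebra K L]

theorem isSquare_of_quadratic (hr : IsRealField K)
    (hsq : ∀ x : K, IsSquare x ∨ IsSquare (-x)) {i : L} (hi : i * i = -1)
    (hco : ∀ z : L, ∃ a b : K, z = algebraMap K L a + algebraMap K L b * i) (z : L) :
    IsSquare z := by
  haveI : CharZero K := hr.charZero
  obtain ⟨a, b, rfl⟩ := hco z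
  set φ := algebraMap K L with hφ
  -- r = "nonneg" square root of a² + b²
  obtain ⟨r, hrP, hr2⟩ := exists_isSquare_sqrt hsq
    (isSquare_add hr hsq ⟨a, rfl⟩ ⟨b, rfl⟩ : IsSquare (a * a + b * b))
  have hra : IsSquare ((r - a) * (2:K)⁻¹) :=
    (isSquare_sub_of_sq_add_sq hr hsq hrP hr2).mul (isSquare_two_inv hr hsq)
  have hra' : IsSquare ((r + a) * (2:K)⁻¹) := by
    have h' : r * r = (-a) * (-a) + b * b := by linear_combination hr2
    have := (isSquare_sub_of_sq_add_sq hr hsq hrP h').mul (isSquare_two_inv hr hsq)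
    simpa [sub_neg_eq_add] using this
  obtain ⟨c, hc⟩ := hra'
  obtain ⟨d, hd⟩ := hra
  have hcd : (2 * (c * d) - b) * (2 * (c * d) + b) = 0 := by
    linear_combination (-4*d*d) * hc - (2*(r+a)) * hd + hr2
  have key : ∀ d' : K, d' * d' = (r - a) * (2:K)⁻¹ → 2 * (c * d') = b →
      IsSquare (φ a + φ b * i) := by
    intro d' hd' hbd
    refine ⟨φ c + φ d' * i, ?_⟩
    have hb' : φ b = φ 2 * (φ c * φ d') := by rw [← map_mul, ← map_mul, ← hbd]
    have ha' : φ a = φ c * φ c - φ d' * φ d' := by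
      rw [← map_mul, ← map_mul, ← map_sub]
      congr 1
      linear_combination hc + hd'
    rw [ha', hb']
    have h2L : φ 2 = (2 : L) := map_ofNat φ 2
    rw [h2L]
    linear_combination (-(φ d' * φ d')) * hi
  rcases mul_eq_zero.mp hcd with h | h
  · exact key d hd.symm (by linear_combination h)
  · refine key (-d) (by rw [neg_mul_neg]; exact hd.symm) (by linear_combination -h)

end SquaresInL

/-- A standard characterization of real closed fields: `K` is formally real,
every element of `K` is a square or the negative of a square, and every
polynomial of odd degree over `K` has a root in `K`. -/
def IsRealClosedField (K : Type*) [Field K] : Prop :=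
  IsRealField K ∧ (∀ x : K, IsSquare x ∨ IsSquare (-x)) ∧
    (∀ p : K[X], Odd p.natDegree → ∃ x : K, p.eval x = 0)

/-- **Artin–Schreier**: a quadratic extension of a real closed field by `√-1` is
algebraically closed. -/
theorem isAlgClosed_of_quadratic {K L : Type*} [Field K] [Field L] [Algebra K L]
    (h2 : Module.finrank K L = 2) (i : L) (hi : i * i = -1)
    (hrc : IsRealClosedField K) : IsAlgClosed L := by
  obtain ⟨hre, hsq, hroots⟩ := hrc
  haveI : CharZero K := hre.charZero
  haveI : FiniteDimensional K L := FiniteDimensional.of_finrank_eq_succ h2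
  have hns : ¬ IsSquare (-1 : K) := hre.not_isSquare_neg_one
  have hco := coords_of_finrank_two h2 (i_not_mem_range hns hi)
  have hLsq : ∀ z : L, IsSquare z := isSquare_of_quadratic hre hsq hi hco
  haveI : CharZero L := charZero_of_injective_algebraMap (algebraMap K L).injective
  apply IsAlgClosed.of_exists_root
  intro p pmonic pirr
  suffices hdeg : p.natDegree = 1 by
    refine ⟨-(p.coeff 0), ?_⟩
    rw [pmonic.eq_X_add_C hdeg]
    simp
  haveI : Fact (Irreducible p) := ⟨pirr⟩
  have hp0 : p ≠ 0 := pmonic.ne_zero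
  set N := AdjoinRoot p with hN
  let pb : PowerBasis L N := AdjoinRoot.powerBasis hp0
  haveI : FiniteDimensional L N := pb.finite
  have hdim : Module.finrank L N = p.natDegree := by
    rw [pb.finrank, AdjoinRoot.powerBasis_dim]
  haveI : FiniteDimensional K N := FiniteDimensional.trans K L N
  set Ω := AlgebraicClosure N with hΩ
  haveI : Algebra.IsAlgebraic K N := Algebra.IsAlgebraic.of_finite K N
  haveI : Algebra.IsAlgebraic K Ω := Algebra.IsAlgebraic.trans K N Ω
  haveI : IsAlgClosure K Ω := ⟨inferInstance, inferInstance⟩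
  haveI : Normal K Ω := IsAlgClosure.normal K Ω
  set M := normalClosure K N Ω with hM
  haveI : FiniteDimensional K M := normalClosure.is_finiteDimensional K N Ω
  haveI : IsGalois K M := ⟨⟩
  obtain ⟨n, hn⟩ := finrank_two_pow_of_galois hroots (↥M)
  set f₀ := IsScalarTower.toAlgHom K N Ω with hf₀
  let ψ : L →ₐ[K] M :=
    AlgHom.codRestrict (f₀.comp (IsScalarTower.toAlgHom K L N)) M.toSubalgebra
      (fun x => AlgHom.fieldRange_le_normalClosure f₀ ⟨algebraMap L N x, rfl⟩)
  set L' := ψ.fieldRange with hL'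
  haveI : FiniteDimensional (↥L') (↥M) := FiniteDimensional.right K (↥L') (↥M)
  have hdvd : Module.finrank (↥L') (↥M) ∣ 2 ^ n :=
    ⟨Module.finrank K (↥L'), by
      rw [← hn, ← Module.finrank_mul_finrank K (↥L') (↥M), mul_comm]⟩
  obtain ⟨m, hmle, hm⟩ := (Nat.dvd_prime_pow Nat.prime_two).mp hdvd
  have hm0 : m = 0 := by
    by_contra hm0
    classical
    have hcardG' : Nat.card ((↥M) ≃ₐ[↥L'] (↥M)) = 2 ^ m := by
      rw [IsGalois.card_aut_eq_finrank, hm]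
    obtain ⟨Q, hQ⟩ := Sylow.exists_subgroup_card_pow_prime (G := (↥M) ≃ₐ[↥L'] (↥M)) 2
      (n := m - 1) (by rw [hcardG']; exact pow_dvd_pow 2 (by omega))
    have hQcard : Module.finrank (↥(IntermediateField.fixedField Q)) (↥M) = 2 ^ (m - 1) := by
      rw [IntermediateField.finrank_fixedField_eq_card, hQ]
    have htow : Module.finrank (↥L') (↥(IntermediateField.fixedField Q)) *
        Module.finrank (↥(IntermediateField.fixedField Q)) (↥M)
        = Module.finrank (↥L') (↥M) :=
      Module.finrank_mul_finrank _ _ _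
    have h2' : Module.finrank (↥L') (↥(IntermediateField.fixedField Q)) = 2 := by
      rw [hQcard, hm] at htow
      have hpow : 2 ^ m = 2 * 2 ^ (m - 1) := by
        rw [← pow_succ']
        congr 1
        omega
      rw [hpow] at htow
      exact Nat.eq_of_mul_eq_mul_right (Nat.pos_of_ne_zero (pow_ne_zero _ two_ne_zero)) htow
    have hsqL' : ∀ z : ↥L', IsSquare z := by
      intro z
      obtain ⟨w, hw⟩ := AlgHom.mem_fieldRange.mp z.2
      obtain ⟨u, hu⟩ := hLsq w
      refine ⟨⟨ψ u, AlgHom.mem_fieldRange.mpr ⟨u, rfl⟩⟩, ?_⟩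
      apply Subtype.ext
      show z.val = ψ u * ψ u
      rw [← map_mul, ← hu, hw]
    have h2ne : (2 : ↥L') ≠ 0 := by
      haveI : CharZero (↥L') := charZero_of_injective_algebraMap (algebraMap K (↥L')).injective
      exact two_ne_zero
    exact no_quadratic_ext h2' hsqL' h2ne
  rw [hm0, pow_zero] at hm
  have hsurj : Function.Surjective (algebraMap L N) := by
    intro x
    have hxM : f₀ x ∈ M := AlgHom.fieldRange_le_normalClosure f₀ ⟨x, rfl⟩
    have hbot : (⊥ : Subalgebra (↥L') (↥M)) = ⊤ :=
      Subalgebra.bot_eq_top_iff_finrank_eq_one.mpr hm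
    have hmem : (⟨f₀ x, hxM⟩ : ↥M) ∈ (⊥ : Subalgebra (↥L') (↥M)) := by
      rw [hbot]; trivial
    rw [Algebra.mem_bot] at hmem
    obtain ⟨y, hy⟩ := hmem
    obtain ⟨w, hw⟩ := AlgHom.mem_fieldRange.mp y.2
    refine ⟨w, ?_⟩
    apply (f₀ : N →+* Ω).injective
    show f₀ (algebraMap L N w) = f₀ x
    have h1 : (ψ w : ↥M).val = f₀ (algebraMap L N w) := rfl
    have h2v : (algebraMap (↥L') (↥M) y).val = y.val.val := rfl
    have h3 : (algebraMap (↥L') (↥M) y) = (⟨f₀ x, hxM⟩ : ↥M) := hy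
    calc f₀ (algebraMap L N w) = (ψ w : ↥M).val := h1.symm
      _ = y.val.val := by rw [hw]
      _ = (⟨f₀ x, hxM⟩ : ↥M).val := by rw [← h2v, h3]
      _ = f₀ x := rfl
  have hbotN : (⊥ : Subalgebra L N) = ⊤ := by
    rw [eq_top_iff]
    intro x _
    rw [Algebra.mem_bot]
    exact hsurj x
  have h1' : Module.finrank L N = 1 := Subalgebra.bot_eq_top_iff_finrank_eq_one.mp hbotN
  rw [← hdim, h1']

section Backward
variable {K L : Type*} [Field K] [Field L] [Algebra K L]

theorem coords_unique (hns : ¬ IsSquare (-1 : K)) {i : L} (hi : i * i = -1)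
    {a b : K} (h : algebraMap K L a + algebraMap K L b * i = 0) : a = 0 ∧ b = 0 := by
  set φ := algebraMap K L with hφ
  by_cases hb : b = 0
  · subst hb
    simp only [map_zero, zero_mul, add_zero] at h
    exact ⟨(algebraMap K L).injective (by rw [h, map_zero]), rfl⟩
  · exfalso
    apply i_not_mem_range hns hi
    refine ⟨-a / b, ?_⟩
    have hφb : φ b ≠ 0 := fun h0 => hb ((algebraMap K L).injective (by rw [h0, map_zero]))
    rw [map_div₀, map_neg]
    rw [div_eq_iff (show algebraMap K L b ≠ 0 from hφb)]
    linear_combination -h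

theorem isRealClosed_of_quadratic_algClosed (hr : IsRealField K)
    (h2 : Module.finrank K L = 2) {i : L} (hi : i * i = -1) [IsAlgClosed L] :
    IsRealClosedField K := by
  haveI : CharZero K := hr.charZero
  haveI : FiniteDimensional K L := FiniteDimensional.of_finrank_eq_succ h2
  have hns : ¬ IsSquare (-1 : K) := hr.not_isSquare_neg_one
  have hco := coords_of_finrank_two h2 (i_not_mem_range hns hi)
  set φ := algebraMap K L with hφ
  refine ⟨hr, ?_, ?_⟩
  · -- every element is a square or the negative of a square
    intro x
    obtain ⟨z, hz⟩ := IsAlgClosed.exists_pow_nat_eq (φ x) (n := 2) (by norm_num)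
    obtain ⟨a, b, rfl⟩ := hco z
    have hz' : φ (a * a - b * b - x) + φ (2 * (a * b)) * i = 0 := by
      rw [map_sub, map_sub, map_mul, map_mul, map_mul, map_mul, map_ofNat]
      have hzz : (φ a + φ b * i) * (φ a + φ b * i) = φ x := by rw [← sq, hz]
      linear_combination hzz - (φ b * φ b) * hi
    obtain ⟨h1, h2'⟩ := coords_unique hns hi hz'
    have hab : a * b = 0 := by
      have h2K : (2 : K) ≠ 0 := two_ne_zero
      rcases mul_eq_zero.mp h2' with h | h
      · exact absurd h h2K
      · exact h
    rcases mul_eq_zero.mp hab with h | h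
    · right
      refine ⟨b, ?_⟩
      rw [h] at h1
      linear_combination h1
    · left
      refine ⟨a, ?_⟩
      rw [h] at h1
      linear_combination -h1
  · -- odd degree polynomials have roots
    have main : ∀ n : ℕ, ∀ p : K[X], p.natDegree = n → Odd p.natDegree →
        ∃ x : K, p.eval x = 0 := by
      intro n
      induction n using Nat.strong_induction_on with
      | _ n ih =>
        intro p hn hodd
        rw [hn] at hodd
        have hne : p ≠ 0 := by
          intro h0
          rw [h0, natDegree_zero] at hn
          rw [← hn] at hodd
          simpa using Nat.odd_iff.mp hodd
        have hnu : ¬ IsUnit p := by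
          intro hu
          rw [natDegree_eq_zero_of_isUnit hu] at hn
          rw [← hn] at hodd
          simpa using Nat.odd_iff.mp hodd
        obtain ⟨q, hqirr, r, rfl⟩ := WfDvdMonoid.exists_irreducible_factor hnu hne
        have hq0 : q ≠ 0 := hqirr.ne_zero
        have hr0 : r ≠ 0 := fun h0 => hne (by rw [h0, mul_zero])
        have hqpos : 0 < q.natDegree := hqirr.natDegree_pos
        have hqdeg : q.natDegree ≤ 2 := by
          have hdeg0 : q.degree ≠ 0 := by
            rw [degree_eq_natDegree hq0]
            intro hh
            have : q.natDegree = 0 := by exact_mod_cast hh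
            omega
          obtain ⟨z, hz⟩ := IsAlgClosed.exists_aeval_eq_zero L q hdeg0
          have hint : IsIntegral K z := IsIntegral.of_finite K z
          obtain ⟨c, hc⟩ := minpoly.dvd K z hz
          rcases hqirr.isUnit_or_isUnit hc with h | h
          · exact absurd h (minpoly.not_isUnit K z)
          · have hc0 : c.natDegree = 0 := natDegree_eq_zero_of_isUnit h
            have hcne : c ≠ 0 := h.ne_zero
            rw [hc, natDegree_mul (minpoly.ne_zero hint) hcne, hc0, add_zero]
            calc (minpoly K z).natDegree ≤ Module.finrank K L := minpoly.natDegree_le z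
              _ = 2 := h2
        have hmuldeg : q.natDegree + r.natDegree = n := by
          rw [← hn, natDegree_mul hq0 hr0]
        rcases (by omega : q.natDegree = 1 ∨ q.natDegree = 2) with h1 | hq2
        · -- linear factor
          have hq' := eq_X_add_C_of_natDegree_le_one (le_of_eq h1)
          have hc1 : q.coeff 1 ≠ 0 := by
            have := leadingCoeff_ne_zero.mpr hq0
            rwa [leadingCoeff, h1] at this
          refine ⟨-(q.coeff 0) / q.coeff 1, ?_⟩
          rw [eval_mul]
          apply mul_eq_zero_of_left
          rw [hq']
          simp only [eval_add, eval_mul, eval_C, eval_X]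
          field_simp
          rw [← hq', mul_div_assoc, mul_comm, div_mul_cancel₀ _ hc1]
          ring
        · -- quadratic factor: recurse on r
          have hrodd : Odd r.natDegree := by
            rcases hodd with ⟨k, hk⟩
            exact ⟨k - 1, by omega⟩
          obtain ⟨x, hx⟩ := ih r.natDegree (by omega) r rfl hrodd
          refine ⟨x, ?_⟩
          rw [eval_mul, hx, mul_zero]
    intro p hodd
    exact main p.natDegree p rfl hodd

end Backward

section Main
variable (K : Type*) [Field K]

theorem main_aux (hnt : Nontrivial (K[X] ⧸ Ideal.span {(X : K[X]) ^ 2 + 1}))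
    (hns : ¬ IsSquare (-1 : K)) :
    ∃ alg : Algebra K (K[X] ⧸ Ideal.span {(X : K[X]) ^ 2 + 1}),
      ∃ i : K[X] ⧸ Ideal.span {(X : K[X]) ^ 2 + 1},
        i * i = -1 ∧ ∀ z : K[X] ⧸ Ideal.span {(X : K[X]) ^ 2 + 1},
          ∃ a b : K, z = @algebraMap K _ _ _ alg a
            + @algebraMap K _ _ _ alg b * i := by
  set I : Ideal K[X] := Ideal.span {(X : K[X]) ^ 2 + 1} with hI
  let φ : K →+* (K[X] ⧸ I) := (Ideal.Quotient.mk I).comp (C : K →+* K[X])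
  letI alg : Algebra K (K[X] ⧸ I) := φ.toAlgebra
  set i : K[X] ⧸ I := Ideal.Quotient.mk I X with hidef
  have hmem : ((X : K[X]) ^ 2 + 1) ∈ I := by rw [hI]; exact Ideal.mem_span_singleton_self _
  have hi : i * i = -1 := by
    have h0 : i * i + 1 = 0 := by
      rw [hidef, ← map_one (Ideal.Quotient.mk I), ← map_mul, ← map_add]
      apply Ideal.Quotient.eq_zero_iff_mem.mpr
      have hXX : (X : K[X]) * X + 1 = X ^ 2 + 1 := by ring
      rw [hXX]
      exact hmem
    linear_combination h0
  have hmonic : ((X : K[X]) ^ 2 + 1).Monic := by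
    have := monic_X_pow_add (p := (1 : K[X])) (n := 2) (by simp)
    simpa using this
  refine ⟨alg, i, hi, ?_⟩
  intro z
  obtain ⟨pp, rfl⟩ := Ideal.Quotient.mk_surjective z
  have hmod : Ideal.Quotient.mk I pp = Ideal.Quotient.mk I (pp %ₘ ((X : K[X]) ^ 2 + 1)) := by
    conv_lhs => rw [← modByMonic_add_div pp ((X : K[X]) ^ 2 + 1)]
    rw [map_add, map_mul, Ideal.Quotient.eq_zero_iff_mem.mpr hmem, zero_mul, add_zero]
  have hdeglt : (pp %ₘ ((X : K[X]) ^ 2 + 1)).degree < 2 := by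
    have h' := degree_modByMonic_lt pp hmonic
    have hd : ((X : K[X]) ^ 2 + 1).degree = 2 := by
      have := degree_X_pow_add_C (by norm_num : 0 < 2) (1 : K)
      simpa using this
    rwa [hd] at h'
  have hdle : (pp %ₘ ((X : K[X]) ^ 2 + 1)).natDegree ≤ 1 := by
    by_cases h0 : pp %ₘ ((X : K[X]) ^ 2 + 1) = 0
    · rw [h0]; simp
    · have h' := (degree_eq_natDegree h0) ▸ hdeglt
      exact_mod_cast Nat.lt_succ_iff.mp (by exact_mod_cast h')
  set r := pp %ₘ ((X : K[X]) ^ 2 + 1) with hrdef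
  have hr : r = C (r.coeff 1) * X + C (r.coeff 0) := eq_X_add_C_of_natDegree_le_one hdle
  refine ⟨r.coeff 0, r.coeff 1, ?_⟩
  rw [hmod]
  conv_lhs => rw [hr]
  rw [map_add, map_mul]
  show Ideal.Quotient.mk I (C (r.coeff 1)) * i + φ (r.coeff 0) = φ (r.coeff 0) + φ (r.coeff 1) * i
  show φ (r.coeff 1) * i + φ (r.coeff 0) = φ (r.coeff 0) + φ (r.coeff 1) * i
  ring

end Main

theorem realClosed_iff_adjoin_i_algClosed (K : Type*) [Field K] :
    IsRealClosedField K ↔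
      (IsRealField K ∧ ¬ IsSquare (-1 : K) ∧
        ∃ hf : IsField (K[X] ⧸ Ideal.span {(X : K[X]) ^ 2 + 1}),
          @IsAlgClosed (K[X] ⧸ Ideal.span {(X : K[X]) ^ 2 + 1}) hf.toField) := by
  constructor
  · intro hrc
    have hns : ¬ IsSquare (-1 : K) := hrc.1.not_isSquare_neg_one
    have hirr : Irreducible ((X : K[X]) ^ 2 + 1) := by
      have heq : (X : K[X]) ^ 2 + 1 = X ^ 2 - C (-1) := by
        rw [map_neg, map_one, sub_neg_eq_add]
      rw [heq]
      refine (X_pow_sub_C_irreducible_iff_of_prime Nat.prime_two).mpr ?_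
      intro b hb
      exact hns ⟨b, by rw [← hb]; ring⟩
    have hmax := PrincipalIdealRing.isMaximal_of_irreducible hirr
    have hf : IsField (K[X] ⧸ Ideal.span {(X : K[X]) ^ 2 + 1}) :=
      (Ideal.Quotient.maximal_ideal_iff_isField_quotient _).mp hmax
    refine ⟨hrc.1, hns, hf, ?_⟩
    haveI hnt : Nontrivial (K[X] ⧸ Ideal.span {(X : K[X]) ^ 2 + 1}) := ⟨hf.exists_pair_ne⟩
    obtain ⟨alg, i, hi, hsur⟩ := main_aux K hnt hns
    letI := hf.toField
    letI : Algebra K (K[X] ⧸ Ideal.span {(X : K[X]) ^ 2 + 1}) := alg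
    have hnm : i ∉ Set.range (algebraMap K (K[X] ⧸ Ideal.span {(X : K[X]) ^ 2 + 1})) :=
      i_not_mem_range hns hi
    have h2 := finrank_eq_two_of_coords hnm (fun z => hsur z)
    exact isAlgClosed_of_quadratic h2 i hi hrc
  · rintro ⟨hr, hns, hf, halg⟩
    haveI hnt : Nontrivial (K[X] ⧸ Ideal.span {(X : K[X]) ^ 2 + 1}) := ⟨hf.exists_pair_ne⟩
    obtain ⟨alg, i, hi, hsur⟩ := main_aux K hnt hns
    letI := hf.toField
    letI : Algebra K (K[X] ⧸ Ideal.span {(X : K[X]) ^ 2 + 1}) := alg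
    haveI := halg
    have hnm : i ∉ Set.range (algebraMap K (K[X] ⧸ Ideal.span {(X : K[X]) ^ 2 + 1})) :=
      i_not_mem_range hns hi
    have h2 := finrank_eq_two_of_coords hnm (fun z => hsur z)
    exact isRealClosed_of_quadratic_algClosed hr h2 hi
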